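/- Let l ≥ 5 and let D_l be the root lattice realized inside ℤ^l (with bilinear form b equal to the negative of the standard Euclidean inner product), with simple roots d_i = e_i − e_{i+1} for 1 ≤ i ≤ l−1 and d_l = e_{l−1} + e_l. Embed A₂ into D_l as the sublattice generated by d_l and d_{l−2}, let N = {v ∈ D_l : b(v, d_l) = b(v, d_{l−2}) = 0} be its orthogonal complement, and let R(N) be the root sublattice of N, i.e. the ℤ‑span of {v ∈ N : b(v,v) = −2}. With the glue vectors [1]_{D_l} = ½(Σ_{i=1}^{l−2} i d_i + ½(l−2)d_{l−1} + ½ l d_l), [2]_{D_l} = Σ_{i=1}^{l−2} d_i + ½(d_{l−1}+d_l), [3]_{D_l} = ½(Σ_{i=1}^{l−2} i d_i + ½ l d_{l−1} + ½(l−2) d_l) in ℚ^l, one has: 2·[2]_{D_l} ∈ R(N), but for i = 1 and i = 3 there is no nonzero integer k such that k·[i]_{D_l} ∈ R(N). -/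

import Mathlib

open Finset

/-- Standard basis vector of `ℤˡ`. -/
def stdE (l : ℕ) (i : Fin l) : Fin l → ℤ := Pi.single i 1

/-- Simple roots of the root lattice `D_l`: `dRoot l i` is `d_{i+1}` of the paper
(1-based numbering), i.e. `d_i = e_i − e_{i+1}` for `1 ≤ i ≤ l−1` and
`d_l = e_{l−1} + e_l`. -/
def dRoot (l : ℕ) (i : Fin l) : Fin l → ℤ :=
  if h : (i : ℕ) + 1 < l then stdE l i - stdE l ⟨(i : ℕ) + 1, h⟩
  else stdE l ⟨l - 2, by have := i.isLt; omega⟩ + stdE l i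

/-- The simple roots of `D_l`, viewed in `ℚˡ`. -/
def dRootQ (l : ℕ) (i : Fin l) : Fin l → ℚ := fun j => ((dRoot l i j : ℤ) : ℚ)

/-- Negative of the standard Euclidean inner product on `ℤˡ`. -/
def bD (l : ℕ) (v w : Fin l → ℤ) : ℤ := - ∑ i, v i * w i

/-- The root lattice `D_l`: integer vectors with even coordinate sum. -/
def Dlat (l : ℕ) : Set (Fin l → ℤ) := {v | Even (∑ i, v i)}



lemma stdE_apply (l : ℕ) (a j : Fin l) : stdE l a j = if j = a then 1 else 0 := by
  simp [stdE, Pi.single_apply]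

lemma dRoot_apply (l : ℕ) (i : Fin l) (h : (i : ℕ) + 1 < l) (j : Fin l) :
    dRoot l i j = (if (j : ℕ) = (i : ℕ) then 1 else 0)
      - (if (j : ℕ) = (i : ℕ) + 1 then 1 else 0) := by
  simp [dRoot, dif_pos h, stdE, Pi.single_apply, Fin.ext_iff]

lemma dRoot_apply_last (l : ℕ) (i : Fin l) (h : ¬ ((i : ℕ) + 1 < l)) (j : Fin l) :
    dRoot l i j = (if (j : ℕ) = l - 2 then 1 else 0)
      + (if (j : ℕ) = (i : ℕ) then 1 else 0) := by
  simp [dRoot, dif_neg h, stdE, Pi.single_apply, Fin.ext_iff]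

lemma dRootQ_val (l : ℕ) (i : Fin l) (h : (i : ℕ) + 1 < l) (j : Fin l) :
    dRootQ l i j = (if (j : ℕ) = (i : ℕ) then 1 else 0)
      - (if (j : ℕ) = (i : ℕ) + 1 then 1 else 0) := by
  show ((dRoot l i j : ℤ) : ℚ) = _
  rw [dRoot_apply l i h]
  push_cast [apply_ite (Int.cast : ℤ → ℚ)]
  ring

lemma dRootQ_val_last (l : ℕ) (i : Fin l) (h : ¬ ((i : ℕ) + 1 < l)) (j : Fin l) :
    dRootQ l i j = (if (j : ℕ) = l - 2 then 1 else 0)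
      + (if (j : ℕ) = (i : ℕ) then 1 else 0) := by
  show ((dRoot l i j : ℤ) : ℚ) = _
  rw [dRoot_apply_last l i h]
  push_cast [apply_ite (Int.cast : ℤ → ℚ)]
  ring

/-- `gg l n` is the `n`-th standard basis vector of `ℚˡ` (zero if `n ≥ l`). -/
def gg (l : ℕ) : ℕ → (Fin l → ℚ) := fun n j => if (j : ℕ) = n then 1 else 0

lemma dRootQ_eq (l : ℕ) (i : Fin l) (h : (i : ℕ) + 1 < l) :
    dRootQ l i = gg l (i : ℕ) - gg l ((i : ℕ) + 1) := by
  funext j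
  simp [dRootQ, dRoot_apply l i h, gg]

lemma telescope (l : ℕ) (hl : 5 ≤ l) :
    ∑ i ∈ univ.filter (fun i : Fin l => (i : ℕ) ≤ l - 3), dRootQ l i
      = gg l 0 - gg l (l - 2) := by
  rw [Finset.sum_filter]
  have step : ∀ i : Fin l, (if (i : ℕ) ≤ l - 3 then dRootQ l i else 0)
      = (fun n => if n ≤ l - 3 then gg l n - gg l (n + 1) else 0) ((i : ℕ)) := by
    intro i
    by_cases h : (i : ℕ) ≤ l - 3
    · have h' : (i : ℕ) + 1 < l := by omega
      simp only [if_pos h, dRootQ_eq l i h']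
    · simp [h]
  rw [Finset.sum_congr rfl (fun i _ => step i),
    Fin.sum_univ_eq_sum_range (fun n => if n ≤ l - 3 then gg l n - gg l (n + 1) else 0) l]
  rw [← Finset.sum_subset (Finset.range_subset_range.mpr (show l - 2 ≤ l by omega))
      (fun n _ hn => by rw [if_neg (by simp at hn ⊢; omega)])]
  rw [Finset.sum_congr rfl
      (fun n hn => if_pos (by simp at hn; omega)), Finset.sum_range_sub']

lemma root_coord_zero (l : ℕ) (hl : 5 ≤ l) (v : Fin l → ℤ)
    (h1 : bD l v (dRoot l ⟨l - 1, (by omega : l - 1 < l + 0)⟩) = 0)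
    (h2 : bD l v (dRoot l ⟨l - 3, (by omega : l - 3 < l + 0)⟩) = 0)
    (h3 : bD l v v = -2) : v ⟨l - 1, (by omega : l - 1 < l + 0)⟩ = 0 := by
  set a : Fin l := ⟨l - 3, by omega⟩
  set b : Fin l := ⟨l - 2, by omega⟩
  set c : Fin l := ⟨l - 1, by omega⟩
  have hbc : v b + v c = 0 := by
    have e : dRoot l c = stdE l b + stdE l c := by
      rw [dRoot]
      rw [dif_neg (by simp [c]; omega)]
    rw [bD, e] at h1
    have : ∑ j, v j * (stdE l b + stdE l c) j = v b + v c := by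
      simp only [Pi.add_apply, mul_add, Finset.sum_add_distrib]
      simp [stdE, Pi.single_apply]
    omega
  have hab : v a - v b = 0 := by
    have ha' : (a : ℕ) + 1 < l := by simp [a]; omega
    have e : dRoot l a = stdE l a - stdE l b := by
      rw [dRoot, dif_pos ha']
      have hfin : (⟨(a : ℕ) + 1, ha'⟩ : Fin l) = b := by
        ext; simp [a, b]; omega
      rw [hfin]
    rw [bD, e] at h2
    have : ∑ j, v j * (stdE l a - stdE l b) j = v a - v b := by
      simp only [Pi.sub_apply, mul_sub, Finset.sum_sub_distrib]
      simp [stdE, Pi.single_apply]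
    omega
  have hsum : ∑ j, v j * v j = 2 := by rw [bD] at h3; omega
  by_contra hc
  have hb0 : v b ≠ 0 := by omega
  have ha0 : v a ≠ 0 := by omega
  have habne : a ≠ b := by simp [a, b, Fin.ext_iff]; omega
  have hacne : a ≠ c := by simp [a, c, Fin.ext_iff]; omega
  have hbcne : b ≠ c := by simp [b, c, Fin.ext_iff]; omega
  have hsub : ∑ j ∈ ({a, b, c} : Finset (Fin l)), v j * v j ≤ ∑ j, v j * v j :=
    Finset.sum_le_sum_of_subset_of_nonneg (Finset.subset_univ _)
      (fun j _ _ => mul_self_nonneg _)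
  rw [Finset.sum_insert (by simp [habne, hacne]),
    Finset.sum_insert (by simp [hbcne]), Finset.sum_singleton] at hsub
  have g1 : 1 ≤ v a * v a := by rcases lt_or_gt_of_ne ha0 with h | h <;> nlinarith
  have g2 : 1 ≤ v b * v b := by rcases lt_or_gt_of_ne hb0 with h | h <;> nlinarith
  have g3 : 1 ≤ v c * v c := by rcases lt_or_gt_of_ne hc with h | h <;> nlinarith
  omega

lemma glue13_coord (l : ℕ) (hl : 5 ≤ l) (cQ dQ : ℚ) (j : Fin l) (hj : (j : ℕ) = l - 1) :
    ((1 / 2 : ℚ) • ((∑ i ∈ univ.filter (fun i : Fin l => (i : ℕ) ≤ l - 3),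
        (((i : ℕ) : ℚ) + 1) • dRootQ l i)
      + cQ • dRootQ l ⟨l - 2, (by omega : l - 2 < l + 0)⟩
        + dQ • dRootQ l ⟨l - 1, (by omega : l - 1 < l + 0)⟩)) j
      = (dQ - cQ) / 2 := by
  simp only [Pi.smul_apply, Pi.add_apply, Finset.sum_apply, smul_eq_mul]
  rw [Finset.sum_eq_zero (fun i hi => by
    simp only [Finset.mem_filter, Finset.mem_univ, true_and] at hi
    rw [dRootQ_val l i (by omega) j, hj, if_neg (by omega), if_neg (by omega)]
    ring)]
  rw [dRootQ_val l _ (show (l - 2) + 1 < l by omega) j,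
    dRootQ_val_last l _ (show ¬ ((l - 1) + 1 < l) by omega) j]
  simp only [show (((⟨l - 2, by omega⟩ : Fin l)) : ℕ) = l - 2 from rfl,
    show (((⟨l - 1, by omega⟩ : Fin l)) : ℕ) = l - 1 from rfl, hj]
  split_ifs <;> (first | ring1 | (exfalso; omega))

lemma sum_stdE (l : ℕ) (a : Fin l) : ∑ j, stdE l a j = 1 := by
  simp [stdE, Pi.single_apply]

lemma bD_pair_sub (l : ℕ) (a b : Fin l) (w : Fin l → ℤ) :
    bD l (stdE l a - stdE l b) w = -(w a - w b) := by
  rw [bD]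
  congr 1
  simp only [Pi.sub_apply, sub_mul, Finset.sum_sub_distrib]
  simp [stdE, Pi.single_apply]

lemma bD_pair_add (l : ℕ) (a b : Fin l) (w : Fin l → ℤ) :
    bD l (stdE l a + stdE l b) w = -(w a + w b) := by
  rw [bD]
  congr 1
  simp only [Pi.add_apply, add_mul, Finset.sum_add_distrib]
  simp [stdE, Pi.single_apply]

lemma normsq_sub (l : ℕ) (a b : Fin l) (hab : a ≠ b) :
    bD l (stdE l a - stdE l b) (stdE l a - stdE l b) = -2 := by
  rw [bD_pair_sub]
  simp [Pi.sub_apply, stdE_apply, hab, hab.symm]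

lemma normsq_add (l : ℕ) (a b : Fin l) (hab : a ≠ b) :
    bD l (stdE l a + stdE l b) (stdE l a + stdE l b) = -2 := by
  rw [bD_pair_add]
  simp [Pi.add_apply, stdE_apply, hab, hab.symm]

/-- Lemma 2.3: with `A₂ = ⟨d_l, d_{l−2}⟩ ↪ D_l` (`l ≥ 5`), `N` its orthogonal complement
in `D_l` and `R(N)` the root sublattice of `N`, one has `2·[2]_{D_l} ∈ R(N)`, but for
`i = 1, 3` there is no nonzero integer `k` with `k·[i]_{D_l} ∈ R(N)`. -/
theorem stmt4 (l : ℕ) (hl : 5 ≤ l)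
    -- the orthogonal complement of `A₂ = ⟨d_l, d_{l−2}⟩` in `D_l`
    (N : Set (Fin l → ℤ))
    (hN : N = {v | v ∈ Dlat l ∧ bD l v (dRoot l ⟨l - 1, by omega⟩) = 0
        ∧ bD l v (dRoot l ⟨l - 3, by omega⟩) = 0})
    -- its root sublattice
    (R : Submodule ℤ (Fin l → ℤ))
    (hR : R = Submodule.span ℤ {v | v ∈ N ∧ bD l v v = -2})
    -- the glue vectors `[1]_{D_l}`, `[2]_{D_l}`, `[3]_{D_l}` of `ℚˡ`
    (glue1 glue2 glue3 : Fin l → ℚ)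
    (hglue1 : glue1 = (1 / 2 : ℚ) •
        ((∑ i ∈ univ.filter (fun i : Fin l => (i : ℕ) ≤ l - 3),
            (((i : ℕ) : ℚ) + 1) • dRootQ l i)
          + (((l : ℚ) - 2) / 2) • dRootQ l ⟨l - 2, by omega⟩
          + ((l : ℚ) / 2) • dRootQ l ⟨l - 1, by omega⟩))
    (hglue2 : glue2 = (∑ i ∈ univ.filter (fun i : Fin l => (i : ℕ) ≤ l - 3), dRootQ l i)
        + (1 / 2 : ℚ) • (dRootQ l ⟨l - 2, by omega⟩ + dRootQ l ⟨l - 1, by omega⟩))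
    (hglue3 : glue3 = (1 / 2 : ℚ) •
        ((∑ i ∈ univ.filter (fun i : Fin l => (i : ℕ) ≤ l - 3),
            (((i : ℕ) : ℚ) + 1) • dRootQ l i)
          + ((l : ℚ) / 2) • dRootQ l ⟨l - 2, by omega⟩
          + (((l : ℚ) - 2) / 2) • dRootQ l ⟨l - 1, by omega⟩)) :
    -- `2·[2]_{D_l} ∈ R(N)`
    (∃ v ∈ R, (fun j => ((v j : ℤ) : ℚ)) = (2 : ℚ) • glue2)
    -- no nonzero multiple of `[1]_{D_l}` lies in `R(N)`
    ∧ ¬(∃ k : ℤ, k ≠ 0 ∧ ∃ v ∈ R, (fun j => ((v j : ℤ) : ℚ)) = (k : ℚ) • glue1)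
    -- no nonzero multiple of `[3]_{D_l}` lies in `R(N)`
    ∧ ¬(∃ k : ℤ, k ≠ 0 ∧ ∃ v ∈ R, (fun j => ((v j : ℤ) : ℚ)) = (k : ℚ) • glue3) := by
  have hc : l - 1 < l := by omega
  -- every element of R vanishes at coordinate l - 1
  have hRzero : ∀ v ∈ R, v ⟨l - 1, hc⟩ = 0 := by
    intro v hv
    rw [hR] at hv
    have hle : Submodule.span ℤ {v | v ∈ N ∧ bD l v v = -2}
        ≤ LinearMap.ker (LinearMap.proj (R := ℤ) (φ := fun _ : Fin l => ℤ) ⟨l - 1, hc⟩) := by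
      rw [Submodule.span_le]
      intro w hw
      obtain ⟨hwN, hww⟩ := hw
      rw [hN] at hwN
      obtain ⟨-, hb1, hb2⟩ := hwN
      exact LinearMap.mem_ker.mpr (root_coord_zero l hl w hb1 hb2 hww)
    exact hle hv
  -- value of glue1 and glue3 at coordinate l - 1
  have hg1 : glue1 ⟨l - 1, hc⟩ = 1 / 2 := by
    rw [hglue1, glue13_coord l hl (((l : ℚ) - 2) / 2) ((l : ℚ) / 2) ⟨l - 1, hc⟩ rfl]
    ring1
  have hg3 : glue3 ⟨l - 1, hc⟩ = -(1 / 2) := by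
    rw [hglue3, glue13_coord l hl ((l : ℚ) / 2) (((l : ℚ) - 2) / 2) ⟨l - 1, hc⟩ rfl]
    ring1
  -- glue2 is the first standard basis vector
  have hg2 : glue2 = gg l 0 := by
    rw [hglue2, telescope l hl]
    have ha : dRootQ l ⟨l - 2, by omega⟩ = gg l (l - 2) - gg l (l - 1) := by
      rw [dRootQ_eq l _ (show (l - 2) + 1 < l by omega),
        show (((⟨l - 2, by omega⟩ : Fin l)) : ℕ) = l - 2 from rfl,
        show l - 2 + 1 = l - 1 from by omega]
    have hb : dRootQ l ⟨l - 1, by omega⟩ = gg l (l - 2) + gg l (l - 1) := by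
      funext j
      rw [show dRootQ l ⟨l - 1, by omega⟩ j = ((dRoot l ⟨l - 1, by omega⟩ j : ℤ) : ℚ) from rfl,
        dRoot_apply_last l _ (show ¬ ((l - 1) + 1 < l) by omega)]
      push_cast [apply_ite (Int.cast : ℤ → ℚ)]
      simp [gg]
    rw [ha, hb]
    funext j
    simp only [Pi.add_apply, Pi.sub_apply, Pi.smul_apply, smul_eq_mul]
    ring1
  have h01 : (⟨0, by omega⟩ : Fin l) ≠ ⟨1, by omega⟩ := by
    simp [Fin.ext_iff]
  refine ⟨?_, ?_, ?_⟩
  · -- 2·glue2 ∈ R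
    refine ⟨(stdE l ⟨0, by omega⟩ - stdE l ⟨1, by omega⟩)
      + (stdE l ⟨0, by omega⟩ + stdE l ⟨1, by omega⟩), ?_, ?_⟩
    · rw [hR]
      have hmemN : ∀ w : Fin l → ℤ, Even (∑ j, w j) →
          w ⟨l - 2, by omega⟩ = 0 → w ⟨l - 1, by omega⟩ = 0 →
          w ⟨l - 3, by omega⟩ = 0 → w ∈ N := by
        intro w he e2 e1 e3
        rw [hN]
        refine ⟨he, ?_, ?_⟩
        · rw [show dRoot l ⟨l - 1, by omega⟩
              = stdE l ⟨l - 2, by omega⟩ + stdE l ⟨l - 1, by omega⟩ from by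
            rw [dRoot, dif_neg (show ¬ ((l - 1) + 1 < l) by omega)]]
          rw [bD]
          have : ∑ j, w j * (stdE l ⟨l - 2, by omega⟩ + stdE l ⟨l - 1, by omega⟩) j
              = w ⟨l - 2, by omega⟩ + w ⟨l - 1, by omega⟩ := by
            simp only [Pi.add_apply, mul_add, Finset.sum_add_distrib]
            simp [stdE, Pi.single_apply]
          rw [this, e2, e1]
          ring1
        · rw [show dRoot l ⟨l - 3, by omega⟩
              = stdE l ⟨l - 3, by omega⟩ - stdE l ⟨l - 2, by omega⟩ from by
            rw [dRoot, dif_pos (show (l - 3) + 1 < l by omega)]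
            have hfin : (⟨(((⟨l - 3, by omega⟩ : Fin l)) : ℕ) + 1,
                show (l - 3) + 1 < l by omega⟩ : Fin l) = (⟨l - 2, by omega⟩ : Fin l) := by
              ext
              show l - 3 + 1 = l - 2
              omega
            rw [hfin]]
          rw [bD]
          have : ∑ j, w j * (stdE l ⟨l - 3, by omega⟩ - stdE l ⟨l - 2, by omega⟩) j
              = w ⟨l - 3, by omega⟩ - w ⟨l - 2, by omega⟩ := by
            simp only [Pi.sub_apply, mul_sub, Finset.sum_sub_distrib]
            simp [stdE, Pi.single_apply]
          rw [this, e3, e2]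
          ring1
      refine Submodule.add_mem _ (Submodule.subset_span ⟨?_, normsq_sub l _ _ h01⟩)
        (Submodule.subset_span ⟨?_, normsq_add l _ _ h01⟩)
      · refine hmemN _ ?_ ?_ ?_ ?_
        · simp only [Pi.sub_apply, Finset.sum_sub_distrib, sum_stdE]
          norm_num
        all_goals
          simp only [Pi.sub_apply, stdE_apply]
          rw [if_neg (by simp [Fin.ext_iff]; omega), if_neg (by simp [Fin.ext_iff]; omega)]
          ring1
      · refine hmemN _ ?_ ?_ ?_ ?_
        · simp only [Pi.add_apply, Finset.sum_add_distrib, sum_stdE]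
          norm_num
        all_goals
          simp only [Pi.add_apply, stdE_apply]
          rw [if_neg (by simp [Fin.ext_iff]; omega), if_neg (by simp [Fin.ext_iff]; omega)]
          ring1
    · rw [hg2]
      funext j
      show (((_ : Fin l → ℤ) j : ℤ) : ℚ) = ((2 : ℚ) • gg l 0) j
      simp only [Pi.add_apply, Pi.sub_apply, Pi.smul_apply, smul_eq_mul, stdE_apply, gg,
        Fin.ext_iff]
      push_cast [apply_ite (Int.cast : ℤ → ℚ)]
      split_ifs <;> norm_num
  · rintro ⟨k, hk, v, hvR, hveq⟩
    have h0 := congrFun hveq ⟨l - 1, hc⟩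
    rw [hRzero v hvR, Pi.smul_apply, hg1, smul_eq_mul] at h0
    have hk0 : (k : ℚ) = 0 := by push_cast at h0; linarith
    exact hk (by exact_mod_cast hk0)
  · rintro ⟨k, hk, v, hvR, hveq⟩
    have h0 := congrFun hveq ⟨l - 1, hc⟩
    rw [hRzero v hvR, Pi.smul_apply, hg3, smul_eq_mul] at h0
    have hk0 : (k : ℚ) = 0 := by push_cast at h0; linarith
    exact hk (by exact_mod_cast hk0)
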